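/- arXiv:2109.12163 — 9 statements merged into one kernel-verified Lean document; each statement's English description precedes it below -/
import Mathlib

section
/- For every initial condition (x₀, y₀) ∈ ℝ² with |y₀| < 1, the curve t ↦ (x(t), y(t)) defined by x(t) = x₀ e^t and y(t) = y₀ / √((1 − y₀²) e^{2t} + y₀²) is defined for all t ∈ ℝ, satisfies |y(t)| < 1 for all t, satisfies the initial condition (x(0), y(0)) = (x₀, y₀), and solves the system of ODEs ẋ = x, ẏ = −y + y³. -/
/-- For every initial condition `(x₀, y₀)` with `|y₀| < 1`, the explicit curve
`x t = x₀ e^t`, `y t = y₀ / √((1 − y₀²) e^{2t} + y₀²)` is defined for all `t`,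
stays in `|y| < 1`, satisfies the initial condition at `t = 0`, and solves the
nonlinear saddle system `ẋ = x`, `ẏ = −y + y³`. -/
theorem ftle_keig_stmt0 (x₀ y₀ : ℝ) (h : |y₀| < 1) :
    let x : ℝ → ℝ := fun t => x₀ * Real.exp t
    let y : ℝ → ℝ := fun t => y₀ / Real.sqrt ((1 - y₀ ^ 2) * Real.exp (2 * t) + y₀ ^ 2)
    x 0 = x₀ ∧ y 0 = y₀ ∧
      ∀ t : ℝ, |y t| < 1 ∧ HasDerivAt x (x t) t ∧ HasDerivAt y (-(y t) + (y t) ^ 3) t := by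
  intro x y
  have hy2 : y₀ ^ 2 < 1 := by
    have := abs_nonneg y₀
    nlinarith [sq_abs y₀]
  have hDpos : ∀ t : ℝ, 0 < (1 - y₀ ^ 2) * Real.exp (2 * t) + y₀ ^ 2 := by
    intro t
    have h1 : 0 < (1 - y₀ ^ 2) * Real.exp (2 * t) :=
      mul_pos (by linarith) (Real.exp_pos _)
    nlinarith [sq_nonneg y₀]
  refine ⟨by simp [x], ?_, ?_⟩
  · show y₀ / Real.sqrt ((1 - y₀ ^ 2) * Real.exp (2 * 0) + y₀ ^ 2) = y₀
    norm_num
  · intro t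
    set D : ℝ := (1 - y₀ ^ 2) * Real.exp (2 * t) + y₀ ^ 2 with hDdef
    have hD : 0 < D := hDpos t
    have hs : 0 < Real.sqrt D := Real.sqrt_pos.mpr hD
    have hs2 : Real.sqrt D ^ 2 = D := Real.sq_sqrt hD.le
    refine ⟨?_, ?_, ?_⟩
    · show |y₀ / Real.sqrt D| < 1
      rw [abs_div, abs_of_pos hs, div_lt_one hs]
      have : |y₀| ^ 2 < D := by
        rw [sq_abs]
        have h1 : 0 < (1 - y₀ ^ 2) * Real.exp (2 * t) :=
          mul_pos (by linarith) (Real.exp_pos _)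
        simp only [hDdef]; linarith
      nlinarith [abs_nonneg y₀, Real.sqrt_nonneg D]
    · simpa [x, mul_comm] using ((Real.hasDerivAt_exp t).const_mul x₀)
    · -- derivative of D
      have hDder : HasDerivAt (fun s : ℝ => (1 - y₀ ^ 2) * Real.exp (2 * s) + y₀ ^ 2)
          ((1 - y₀ ^ 2) * (Real.exp (2 * t) * 2)) t := by
        have h1 : HasDerivAt (fun s : ℝ => Real.exp (2 * s)) (Real.exp (2 * t) * 2) t := by
          simpa using (((hasDerivAt_id t).const_mul 2).exp)
        exact (h1.const_mul _).add_const _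
      have hsq : HasDerivAt (fun s : ℝ => Real.sqrt ((1 - y₀ ^ 2) * Real.exp (2 * s) + y₀ ^ 2))
          ((1 - y₀ ^ 2) * (Real.exp (2 * t) * 2) / (2 * Real.sqrt D)) t :=
        hDder.sqrt hD.ne'
      have hder := (hsq.inv hs.ne').const_mul y₀
      simp only [y, div_eq_mul_inv]
      convert hder using 1
      show -(y₀ * (Real.sqrt D)⁻¹) + (y₀ * (Real.sqrt D)⁻¹) ^ 3 = _
      have hcube : Real.sqrt D ^ 3 = Real.sqrt D * D := by
        rw [pow_succ, hs2]; ring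
      have hs2' : Real.sqrt D ^ 2 = (1 - y₀ ^ 2) * Real.exp (2 * t) + y₀ ^ 2 := by
        rw [hs2]
      field_simp
      have hne : Real.sqrt ((1 - y₀ ^ 2) * Real.exp (2 * t) + y₀ ^ 2) ^ 2 ≠ 0 := (pow_pos hs 2).ne'
      rw [eq_neg_iff_add_eq_zero, add_div' _ _ _ hne, div_eq_zero_iff, or_iff_left hne]
      linear_combination (-y₀ * Real.sqrt D ^ 2) * hs2'
      all_goals rfl
end

section
/- For every y ∈ ℝ with |y| < 1, the function σ_t(y) = −(1/(2t)) · log( e^{4t} / ((1 − y²) e^{2t} + y²)³ ), defined for t ≠ 0, tends to 1 − 3y² as t → 0. In particular, the backward-time finite-time Lyapunov exponent of the nonlinear saddle converges, as the integration time tends to zero, to the negative of the attraction rate s₁(y) = −1 + 3y². -/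
open Topology Filter

/-- For `|y| < 1`, the backward-time FTLE of the nonlinear saddle,
`σ_t(y) = −(1/(2t)) log( e^{4t} / ((1 − y²) e^{2t} + y²)³ )` (defined for `t ≠ 0`),
tends to `1 − 3y²` as `t → 0`; in particular, along `t < 0` it converges to the
negative of the attraction rate `s₁(y) = −1 + 3y²`. -/
theorem ftle_keig_stmt2 (y : ℝ) (h : |y| < 1) :
    Tendsto
      (fun t : ℝ =>
        -(1 / (2 * t)) *
          Real.log (Real.exp (4 * t) / ((1 - y ^ 2) * Real.exp (2 * t) + y ^ 2) ^ 3))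
      (𝓝[≠] (0 : ℝ)) (𝓝 (1 - 3 * y ^ 2)) ∧
    Tendsto
      (fun t : ℝ =>
        -(1 / (2 * t)) *
          Real.log (Real.exp (4 * t) / ((1 - y ^ 2) * Real.exp (2 * t) + y ^ 2) ^ 3))
      (𝓝[<] (0 : ℝ)) (𝓝 (-(-1 + 3 * y ^ 2))) := by
  have hc : (0:ℝ) < 1 - y ^ 2 := by
    have := (sq_lt_one_iff_abs_lt_one (a := y)).2 h
    linarith
  set c := 1 - y ^ 2 with hcdef
  have hD : ∀ t : ℝ, 0 < c * Real.exp (2 * t) + y ^ 2 := fun t => by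
    have := Real.exp_pos (2 * t)
    nlinarith [sq_nonneg y]
  set D : ℝ → ℝ := fun t => c * Real.exp (2 * t) + y ^ 2 with hDdef
  have hD0 : D 0 = 1 := by simp [hDdef, hcdef]
  set g : ℝ → ℝ := fun t => Real.log (D t) with hgdef
  have hDderiv : HasDerivAt D (2 * c) 0 := by
    have h1 : HasDerivAt (fun t : ℝ => 2 * t) 2 0 := by
      simpa using (hasDerivAt_id (0:ℝ)).const_mul 2
    have h2 : HasDerivAt (fun t : ℝ => Real.exp (2 * t)) (Real.exp (2 * 0) * 2) 0 :=
      h1.exp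
    have h3 := (h2.const_mul c).add_const (y ^ 2)
    simpa [hDdef, mul_comm, mul_assoc, mul_left_comm] using h3
  have hgderiv : HasDerivAt g (2 * c) 0 := by
    have := hDderiv.log (by rw [hD0]; norm_num)
    simpa [hgdef, hD0] using this
  have hslope : Tendsto (fun t : ℝ => g t / t) (𝓝[≠] (0:ℝ)) (𝓝 (2 * c)) := by
    have := hasDerivAt_iff_tendsto_slope.1 hgderiv
    refine this.congr' ?_
    filter_upwards [self_mem_nhdsWithin] with t ht
    have hg0 : g 0 = 0 := by simp [hgdef, hD0]
    simp [slope_def_field, hg0, div_eq_mul_inv, mul_comm]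
  have hmain : Tendsto
      (fun t : ℝ =>
        -(1 / (2 * t)) *
          Real.log (Real.exp (4 * t) / ((1 - y ^ 2) * Real.exp (2 * t) + y ^ 2) ^ 3))
      (𝓝[≠] (0 : ℝ)) (𝓝 (1 - 3 * y ^ 2)) := by
    have hlim : Tendsto (fun t : ℝ => -2 + (3/2) * (g t / t)) (𝓝[≠] (0:ℝ))
        (𝓝 (-2 + (3/2) * (2 * c))) :=
      (tendsto_const_nhds.add (hslope.const_mul (3/2)))
    have hval : -2 + (3/2) * (2 * c) = 1 - 3 * y ^ 2 := by
      rw [hcdef]; ring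
    rw [hval] at hlim
    refine hlim.congr' ?_
    filter_upwards [self_mem_nhdsWithin] with t ht
    have ht0 : t ≠ 0 := ht
    have hDt := hD t
    have hlog : Real.log (Real.exp (4 * t) / (D t) ^ 3)
        = 4 * t - 3 * Real.log (D t) := by
      rw [Real.log_div (Real.exp_ne_zero _) (by positivity), Real.log_exp,
        Real.log_pow]
      push_cast; ring
    show -2 + (3/2) * (g t / t) = _
    rw [show ((1 - y ^ 2) * Real.exp (2 * t) + y ^ 2) = D t from rfl, hlog]
    field_simp [hgdef]
    ring
  refine ⟨hmain, ?_⟩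
  have : (-(-1 + 3 * y ^ 2) : ℝ) = 1 - 3 * y ^ 2 := by ring
  rw [this]
  exact hmain.mono_left (nhdsWithin_mono _ (fun x hx => ne_of_lt hx))
end

section
/- Let v(x,y) = (x, −y + y³) and g(x,y) = −1 + 3y². Then for all (x,y) ∈ ℝ², v(x,y) · ∇g(x,y) = 6y² g(x,y) − 12y⁴, and there exists no λ ∈ ℝ such that v(x,y) · ∇g(x,y) = λ g(x,y) for all (x,y) with |y| < 1. In other words, the instantaneous attraction rate field s₁(x,y) = −1 + 3y² of the nonlinear saddle is not a Koopman eigenfunction. -/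
lemma dg (y : ℝ) : deriv (fun y' : ℝ => (-1 : ℝ) + 3 * y' ^ 2) y = 6 * y := by
  have h : HasDerivAt (fun y' : ℝ => (-1 : ℝ) + 3 * y' ^ 2) (6 * y) y := by
    have := ((hasDerivAt_pow 2 y).const_mul (3 : ℝ)).const_add (-1 : ℝ)
    exact this.congr_deriv (by ring)
  simpa using h.deriv

/-- For the nonlinear saddle `v(x,y) = (x, −y + y³)` and `g(x,y) = −1 + 3y²`, we have
`v · ∇g = 6y² g − 12y⁴` everywhere, and there is no real `λ` with `v · ∇g = λ g` on
`{|y| < 1}`; i.e., the attraction rate field `s₁ = −1 + 3y²` is not a Koopman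
eigenfunction. -/
theorem ftle_keig_stmt3 :
    (∀ x y : ℝ,
      x * deriv (fun _ : ℝ => (-1 : ℝ) + 3 * y ^ 2) x
        + (-y + y ^ 3) * deriv (fun y' : ℝ => (-1 : ℝ) + 3 * y' ^ 2) y
      = 6 * y ^ 2 * (-1 + 3 * y ^ 2) - 12 * y ^ 4) ∧
    ¬ ∃ l : ℝ, ∀ x y : ℝ, |y| < 1 →
      x * deriv (fun _ : ℝ => (-1 : ℝ) + 3 * y ^ 2) x
        + (-y + y ^ 3) * deriv (fun y' : ℝ => (-1 : ℝ) + 3 * y' ^ 2) y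
      = l * (-1 + 3 * y ^ 2) := by
  constructor
  · intro x y
    rw [deriv_const, dg]
    ring
  · rintro ⟨l, hl⟩
    have h0 := hl 0 0 (by norm_num)
    rw [deriv_const, dg] at h0
    have hl0 : l = 0 := by linarith [h0]
    have h1 := hl 0 (1/2) (by norm_num [abs_of_pos])
    rw [deriv_const, dg, hl0] at h1
    norm_num at h1
end

section
/- Let λ ∈ ℝ and let h : ℝ → ℝ be differentiable. Define φ(x,y) = h( x · √(3y²/(1 − y²)) ) · (3y²/(1 − y²))^{−λ/2} on the domain U = {(x,y) ∈ ℝ² : 0 < |y| < 1}. Then for all (x,y) ∈ U, x · ∂φ/∂x (x,y) + (−y + y³) · ∂φ/∂y (x,y) = λ φ(x,y); that is, φ satisfies the Koopman eigenfunction PDE with eigenvalue λ for the nonlinear saddle vector field. -/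
/-- For any `λ ∈ ℝ` and differentiable `h : ℝ → ℝ`, the function
`φ(x,y) = h(x √(3y²/(1 − y²))) · (3y²/(1 − y²))^{−λ/2}` satisfies the Koopman
eigenfunction PDE `x ∂φ/∂x + (−y + y³) ∂φ/∂y = λ φ` on `{0 < |y| < 1}` for the
nonlinear saddle vector field. -/
theorem ftle_keig_stmt4 (l : ℝ) (h : ℝ → ℝ) (hd : Differentiable ℝ h) :
    ∀ x y : ℝ, 0 < |y| → |y| < 1 →
      x * deriv (fun x' : ℝ =>
            h (x' * Real.sqrt (3 * y ^ 2 / (1 - y ^ 2))) *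
              (3 * y ^ 2 / (1 - y ^ 2)) ^ (-(l / 2))) x
        + (-y + y ^ 3) * deriv (fun y' : ℝ =>
            h (x * Real.sqrt (3 * y' ^ 2 / (1 - y' ^ 2))) *
              (3 * y' ^ 2 / (1 - y' ^ 2)) ^ (-(l / 2))) y
      = l * (h (x * Real.sqrt (3 * y ^ 2 / (1 - y ^ 2))) *
              (3 * y ^ 2 / (1 - y ^ 2)) ^ (-(l / 2))) := by
  intro x y hy0 hy1
  have hy : y ≠ 0 := by
    intro h0; rw [h0] at hy0; simp at hy0
  have hy2 : y ^ 2 < 1 := by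
    have h2 := abs_lt.mp hy1
    nlinarith [sq_abs y]
  have h1 : (0:ℝ) < 1 - y ^ 2 := by linarith
  have hg : (0:ℝ) < 3 * y ^ 2 / (1 - y ^ 2) := by
    apply div_pos _ h1; positivity
  set g : ℝ := 3 * y ^ 2 / (1 - y ^ 2) with hgdef
  set s : ℝ := Real.sqrt g with hsdef
  have hs : 0 < s := Real.sqrt_pos.mpr hg
  have hs2 : s ^ 2 = g := Real.sq_sqrt hg.le
  set c : ℝ := g ^ (-(l / 2)) with hcdef
  set D : ℝ := deriv h (x * s) with hDdef
  set H : ℝ := h (x * s) with hHdef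
  -- x-derivative
  have Hx : HasDerivAt (fun x' : ℝ => h (x' * s) * c) (D * s * c) x := by
    have h1x : HasDerivAt (fun x' : ℝ => x' * s) s x := hasDerivAt_mul_const s
    have h2x : HasDerivAt (fun x' : ℝ => h (x' * s)) (D * s) x :=
      ((hd (x * s)).hasDerivAt).comp x h1x
    exact h2x.mul_const c
  -- y-derivative
  set gp : ℝ := 6 * y / (1 - y ^ 2) ^ 2 with hgpdef
  have hG : HasDerivAt (fun y' : ℝ => 3 * y' ^ 2 / (1 - y' ^ 2)) gp y := by
    have hN : HasDerivAt (fun y' : ℝ => 3 * y' ^ 2) (6 * y) y := by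
      have := (hasDerivAt_pow 2 y).const_mul (3:ℝ)
      exact this.congr_deriv (by ring)
    have hD2 : HasDerivAt (fun y' : ℝ => 1 - y' ^ 2) (-(2 * y)) y := by
      have := (hasDerivAt_pow 2 y).const_sub (1:ℝ)
      exact this.congr_deriv (by push_cast; ring)
    have := hN.div hD2 (by positivity : (1:ℝ) - y ^ 2 ≠ 0)
    refine this.congr_deriv ?_
    rw [hgpdef]; field_simp; ring
  have hsq : HasDerivAt (fun y' : ℝ => Real.sqrt (3 * y' ^ 2 / (1 - y' ^ 2)))
      (1 / (2 * s) * gp) y := by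
    have := (Real.hasDerivAt_sqrt hg.ne').comp y hG
    exact this
  have hcomp : HasDerivAt (fun y' : ℝ => h (x * Real.sqrt (3 * y' ^ 2 / (1 - y' ^ 2))))
      (D * (x * (1 / (2 * s) * gp))) y := by
    have hxs : HasDerivAt (fun y' : ℝ => x * Real.sqrt (3 * y' ^ 2 / (1 - y' ^ 2)))
        (x * (1 / (2 * s) * gp)) y := hsq.const_mul x
    exact ((hd (x * s)).hasDerivAt).comp y hxs
  have hrpow : HasDerivAt (fun y' : ℝ => (3 * y' ^ 2 / (1 - y' ^ 2)) ^ (-(l / 2)))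
      ((-(l / 2)) * g ^ (-(l / 2) - 1) * gp) y := by
    have := (Real.hasDerivAt_rpow_const (p := -(l/2)) (Or.inl hg.ne')).comp y hG
    exact this
  have Hy : HasDerivAt (fun y' : ℝ => h (x * Real.sqrt (3 * y' ^ 2 / (1 - y' ^ 2))) *
      (3 * y' ^ 2 / (1 - y' ^ 2)) ^ (-(l / 2)))
      (D * (x * (1 / (2 * s) * gp)) * c + H * ((-(l / 2)) * g ^ (-(l / 2) - 1) * gp)) y := by
    have := hcomp.mul hrpow
    exact this
  rw [Hx.deriv, Hy.deriv]
  -- algebra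
  have f1 : (-y + y ^ 3) * gp = -(2 * g) := by
    rw [hgpdef, hgdef]; field_simp; ring
  set r : ℝ := g ^ (-(l / 2) - 1) with hrdef
  have f2 : r * g = c := by
    rw [hrdef, hcdef, ← Real.rpow_add_one hg.ne']
    ring_nf
  have hs0 : s ≠ 0 := hs.ne'
  have hgs : g / s = s := by rw [← hs2, pow_two, mul_div_assoc, div_self hs0, mul_one]
  linear_combination (D * x * c / (2 * s) - H * l * r / 2) * f1 + (l * H) * f2 + (-(x * D * c)) * hgs
end

section
/- The function s(x,y) = x · √(3y²/(1 − y²)) satisfies x · ∂s/∂x (x,y) + (−y + y³) · ∂s/∂y (x,y) = 0 for all (x,y) with 0 < |y| < 1; that is, s is a first integral of the nonlinear saddle vector field (equivalently, a Koopman eigenfunction with eigenvalue 0). -/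
/-- The function `s(x,y) = x √(3y²/(1 − y²))` satisfies
`x ∂s/∂x + (−y + y³) ∂s/∂y = 0` on `{0 < |y| < 1}`; i.e., it is a first integral of
the nonlinear saddle vector field (a Koopman eigenfunction with eigenvalue `0`). -/
theorem ftle_keig_stmt5 :
    ∀ x y : ℝ, 0 < |y| → |y| < 1 →
      x * deriv (fun x' : ℝ => x' * Real.sqrt (3 * y ^ 2 / (1 - y ^ 2))) x
        + (-y + y ^ 3) * deriv (fun y' : ℝ => x * Real.sqrt (3 * y' ^ 2 / (1 - y' ^ 2))) y
      = 0 := by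
  intro x y hy0 hy1
  have hy : y ≠ 0 := fun h => by simp [h] at hy0
  have hsq : y ^ 2 < 1 := by nlinarith [sq_abs y, abs_nonneg y]
  have h1pos : (0 : ℝ) < 1 - y ^ 2 := by linarith
  have h1ne : (1 : ℝ) - y ^ 2 ≠ 0 := ne_of_gt h1pos
  have hfpos : (0 : ℝ) < 3 * y ^ 2 / (1 - y ^ 2) := by positivity
  have hfne : (3 * y ^ 2 / (1 - y ^ 2)) ≠ 0 := ne_of_gt hfpos
  -- derivative in x
  have hdx : deriv (fun x' : ℝ => x' * Real.sqrt (3 * y ^ 2 / (1 - y ^ 2))) x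
      = Real.sqrt (3 * y ^ 2 / (1 - y ^ 2)) := by
    simpa using ((hasDerivAt_id x).mul_const (Real.sqrt (3 * y ^ 2 / (1 - y ^ 2)))).deriv
  -- derivative in y
  have hnum : HasDerivAt (fun y' : ℝ => 3 * y' ^ 2) (6 * y) y := by
    have h := (hasDerivAt_pow 2 y).const_mul 3
    refine h.congr_deriv ?_
    ring
  have hden : HasDerivAt (fun y' : ℝ => 1 - y' ^ 2) (-(2 * y)) y := by
    simpa using ((hasDerivAt_pow 2 y).const_sub 1)
  have hf : HasDerivAt (fun y' : ℝ => 3 * y' ^ 2 / (1 - y' ^ 2)) (6 * y / (1 - y ^ 2) ^ 2) y := by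
    have := hnum.div hden h1ne
    refine this.congr_deriv ?_
    field_simp
    ring
  have hds : HasDerivAt (fun y' : ℝ => x * Real.sqrt (3 * y' ^ 2 / (1 - y' ^ 2)))
      (x * (6 * y / (1 - y ^ 2) ^ 2 / (2 * Real.sqrt (3 * y ^ 2 / (1 - y ^ 2))))) y :=
    (hf.sqrt hfne).const_mul x
  rw [hdx, hds.deriv]
  set t := Real.sqrt (3 * y ^ 2 / (1 - y ^ 2)) with ht
  have htpos : 0 < t := Real.sqrt_pos.mpr hfpos
  have htne : t ≠ 0 := ne_of_gt htpos
  have ht2 : t ^ 2 = 3 * y ^ 2 / (1 - y ^ 2) := Real.sq_sqrt (le_of_lt hfpos)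
  have ht3 : t ^ 2 * (1 - y ^ 2) = 3 * y ^ 2 := by
    rw [ht2]; field_simp
  field_simp
  linear_combination 2 * x * (1 - y ^ 2) * ht3
end

section
/- For each integer k ≥ 1 define φ_{−2k}(x,y) = (−1/3)^{k−1} · (3y²/(1 − y²))^k on {(x,y) : |y| < 1}. Then (i) each φ_{−2k} satisfies x · ∂φ_{−2k}/∂x + (−y + y³) · ∂φ_{−2k}/∂y = −2k · φ_{−2k}, i.e., φ_{−2k} is a Koopman eigenfunction of the nonlinear saddle with eigenvalue −2k; and (ii) for all (x,y) with y² < 1/2, the series Σ_{k=1}^∞ φ_{−2k}(x,y) converges and equals 3y². Consequently, on {y² < 1/2} the attraction rate field s₁(x,y) = −1 + 3y² equals the sum Σ_{k=0}^∞ φ_{−2k}(x,y) of Koopman eigenfunctions, where φ₀ ≡ −1 is a Koopman eigenfunction with eigenvalue 0. -/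
/-- The family of Koopman eigenfunctions `φ_{−2k}(x,y) = (−1/3)^{k−1} (3y²/(1 − y²))^k`
for `k ≥ 1`, together with `φ₀ ≡ −1`. -/
noncomputable def ftleKeigPhi (k : ℕ) (_x y : ℝ) : ℝ :=
  if k = 0 then -1 else (-1 / 3 : ℝ) ^ (k - 1) * (3 * y ^ 2 / (1 - y ^ 2)) ^ k

lemma keig_sum1 (x y : ℝ) (h : y ^ 2 < 1 / 2) :
    HasSum (fun k : ℕ => ftleKeigPhi (k + 1) x y) (3 * y ^ 2) := by
  set u : ℝ := 3 * y ^ 2 / (1 - y ^ 2) with hu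
  have hd : (0:ℝ) < 1 - y ^ 2 := by nlinarith [sq_nonneg y]
  have hune : (1:ℝ) - y ^ 2 ≠ 0 := ne_of_gt hd
  have hr : |(-(u / 3))| < 1 := by
    rw [abs_neg, abs_div]
    rw [abs_of_nonneg (by positivity : (0:ℝ) ≤ u)]
    rw [abs_of_pos (by norm_num : (0:ℝ) < 3)]
    rw [div_lt_one (by norm_num : (0:ℝ) < 3), hu, div_lt_iff₀ hd]
    nlinarith [sq_nonneg y]
  have hgeo := (hasSum_geometric_of_abs_lt_one hr).mul_left u
  have heq : ∀ k : ℕ, u * (-(u / 3)) ^ k = ftleKeigPhi (k + 1) x y := by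
    intro k
    simp only [ftleKeigPhi, Nat.add_sub_cancel, Nat.succ_ne_zero, if_false]
    rw [← hu]
    have : (-(u / 3)) ^ k = (-1/3 : ℝ) ^ k * u ^ k := by
      rw [← mul_pow]; ring_nf
    rw [this]; ring
  have hval : u * (1 - -(u / 3))⁻¹ = 3 * y ^ 2 := by
    have h3 : 1 - -(u / 3) = (1 - y ^ 2)⁻¹ := by rw [hu]; field_simp; ring
    rw [h3, inv_inv, hu]; field_simp
  rw [hval] at hgeo
  exact hgeo.congr_fun (fun k => (heq k).symm)


/-- (i) Each `φ_{−2k}` (`k ≥ 1`) is a Koopman eigenfunction of the nonlinear saddle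
with eigenvalue `−2k`; `φ₀ ≡ −1` is a Koopman eigenfunction with eigenvalue `0`;
(ii) for `y² < 1/2` the series `Σ_{k≥1} φ_{−2k}` converges to `3y²`; consequently the
attraction rate `s₁(x,y) = −1 + 3y²` equals `Σ_{k≥0} φ_{−2k}(x,y)` there. -/
theorem ftle_keig_stmt7 :
    (∀ k : ℕ, 1 ≤ k → ∀ x y : ℝ, |y| < 1 →
      x * deriv (fun x' : ℝ => ftleKeigPhi k x' y) x
        + (-y + y ^ 3) * deriv (fun y' : ℝ => ftleKeigPhi k x y') y
      = (-2 * (k : ℝ)) * ftleKeigPhi k x y) ∧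
    (∀ x y : ℝ, |y| < 1 →
      x * deriv (fun x' : ℝ => ftleKeigPhi 0 x' y) x
        + (-y + y ^ 3) * deriv (fun y' : ℝ => ftleKeigPhi 0 x y') y
      = 0 * ftleKeigPhi 0 x y) ∧
    (∀ x y : ℝ, y ^ 2 < 1 / 2 →
      HasSum (fun k : ℕ => ftleKeigPhi (k + 1) x y) (3 * y ^ 2)) ∧
    (∀ x y : ℝ, y ^ 2 < 1 / 2 →
      HasSum (fun k : ℕ => ftleKeigPhi k x y) (-1 + 3 * y ^ 2)) := by
  refine ⟨?_, ?_, keig_sum1, ?_⟩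
  · intro k hk x y hy
    obtain ⟨m, rfl⟩ : ∃ m, k = m + 1 := ⟨k - 1, (Nat.succ_pred_eq_of_pos hk).symm⟩
    have hune : (1:ℝ) - y ^ 2 ≠ 0 := by
      have : y ^ 2 < 1 := by
        have := abs_lt.mp hy; nlinarith
      nlinarith
    set c : ℝ := (-1/3 : ℝ) ^ m with hc
    have hx0 : deriv (fun x' : ℝ => ftleKeigPhi (m+1) x' y) x = 0 := by
      have : (fun x' : ℝ => ftleKeigPhi (m+1) x' y)
          = fun _ => ftleKeigPhi (m+1) 0 y := by
        funext x'; simp [ftleKeigPhi]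
      rw [this, deriv_const]
    have h1 : HasDerivAt (fun y' : ℝ => 3 * y' ^ 2) (6 * y) y := by
      have := (hasDerivAt_pow 2 y).const_mul (3:ℝ)
      simpa using this.congr_deriv (by ring)
    have h2 : HasDerivAt (fun y' : ℝ => 1 - y' ^ 2) (-(2 * y)) y := by
      have := (hasDerivAt_pow 2 y).const_sub (1:ℝ)
      simpa using this.congr_deriv (by ring)
    have hu : HasDerivAt (fun y' : ℝ => 3 * y' ^ 2 / (1 - y' ^ 2))
        (6 * y / (1 - y ^ 2) ^ 2) y := by
      have := h1.div h2 hune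
      refine this.congr_deriv ?_
      field_simp
      ring
    have hpow := hu.pow (m + 1)
    have hfull := hpow.const_mul c
    have hyd : deriv (fun y' : ℝ => ftleKeigPhi (m+1) x y') y
        = c * ((m + 1) * (3 * y ^ 2 / (1 - y ^ 2)) ^ m * (6 * y / (1 - y ^ 2) ^ 2)) := by
      have heq : (fun y' : ℝ => ftleKeigPhi (m+1) x y')
          = fun y' : ℝ => c * (3 * y' ^ 2 / (1 - y' ^ 2)) ^ (m + 1) := by
        funext y'; simp [ftleKeigPhi, hc]
      rw [heq]
      have := hfull.deriv
      simpa [Nat.add_sub_cancel] using this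
    rw [hx0, hyd, mul_zero, zero_add]
    simp only [ftleKeigPhi, Nat.succ_ne_zero, if_false, Nat.add_sub_cancel, ← hc]
    have hcast : ((m + 1 : ℕ) : ℝ) = (m : ℝ) + 1 := by push_cast; ring
    rw [hcast]
    rw [div_pow, div_pow, pow_succ (3 * y ^ 2), pow_succ (1 - y^2)]
    field_simp
    ring
  · intro x y _
    have h1 : (fun x' : ℝ => ftleKeigPhi 0 x' y) = fun _ => (-1:ℝ) := by
      funext; simp [ftleKeigPhi]
    have h2 : (fun y' : ℝ => ftleKeigPhi 0 x y') = fun _ => (-1:ℝ) := by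
      funext; simp [ftleKeigPhi]
    rw [h1, h2, deriv_const, deriv_const]
    ring
  · intro x y h
    refine (hasSum_nat_add_iff' (f := fun k : ℕ => ftleKeigPhi k x y) 1).mp ?_
    convert keig_sum1 x y h using 1
    · rfl
    simp [ftleKeigPhi]
end

section
/- Let n be a natural number, λ ∈ ℝ, and define φ_{n,λ}(x,y) = xⁿ · (3y²/(1 − y²))^{(n−λ)/2} on U = {(x,y) ∈ ℝ² : 0 < |y| < 1}. Then φ_{n,λ} satisfies x · ∂φ_{n,λ}/∂x + (−y + y³) · ∂φ_{n,λ}/∂y = λ φ_{n,λ} on U; that is, φ_{n,λ} is a Koopman eigenfunction of the nonlinear saddle vector field with eigenvalue λ. In particular, xⁿ is a Koopman eigenfunction with eigenvalue n. -/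
/-- For `n : ℕ` and `λ ∈ ℝ`, the function `φ_{n,λ}(x,y) = xⁿ (3y²/(1 − y²))^{(n−λ)/2}`
satisfies the Koopman eigenfunction PDE with eigenvalue `λ` for the nonlinear saddle on
`{0 < |y| < 1}`; in particular `xⁿ` is a Koopman eigenfunction with eigenvalue `n`. -/
theorem ftle_keig_stmt8 (n : ℕ) (l : ℝ) :
    (∀ x y : ℝ, 0 < |y| → |y| < 1 →
      x * deriv (fun x' : ℝ =>
            x' ^ n * (3 * y ^ 2 / (1 - y ^ 2)) ^ (((n : ℝ) - l) / 2)) x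
        + (-y + y ^ 3) * deriv (fun y' : ℝ =>
            x ^ n * (3 * y' ^ 2 / (1 - y' ^ 2)) ^ (((n : ℝ) - l) / 2)) y
      = l * (x ^ n * (3 * y ^ 2 / (1 - y ^ 2)) ^ (((n : ℝ) - l) / 2))) ∧
    (∀ x y : ℝ, 0 < |y| → |y| < 1 →
      x * deriv (fun x' : ℝ => x' ^ n) x
        + (-y + y ^ 3) * deriv (fun _ : ℝ => x ^ n) y
      = (n : ℝ) * x ^ n) := by
  constructor
  · intro x y hy0 hy1
    have hy : y ≠ 0 := by
      intro h; rw [h] at hy0; simp at hy0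
    have hy2 : y ^ 2 < 1 := by
      have := abs_nonneg y
      nlinarith [sq_abs y]
    have hden : (0:ℝ) < 1 - y ^ 2 := by linarith
    have hdne : (1:ℝ) - y ^ 2 ≠ 0 := ne_of_gt hden
    set α : ℝ := ((n : ℝ) - l) / 2 with hα
    have hgpos : (0:ℝ) < 3 * y ^ 2 / (1 - y ^ 2) :=
      div_pos (by positivity) hden
    have hgne : 3 * y ^ 2 / (1 - y ^ 2) ≠ 0 := ne_of_gt hgpos
    -- x-derivative
    have hdx : deriv (fun x' : ℝ =>
        x' ^ n * (3 * y ^ 2 / (1 - y ^ 2)) ^ α) x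
        = (n : ℝ) * x ^ (n - 1) * (3 * y ^ 2 / (1 - y ^ 2)) ^ α := by
      rw [deriv_mul_const (by fun_prop), deriv_pow_field]
    -- y-derivative
    have hg : HasDerivAt (fun y' : ℝ => 3 * y' ^ 2 / (1 - y' ^ 2))
        ((6 * y * (1 - y ^ 2) - 3 * y ^ 2 * (-(2 * y))) / (1 - y ^ 2) ^ 2) y := by
      have h1 : HasDerivAt (fun y' : ℝ => 3 * y' ^ 2) (6 * y) y := by
        have := (hasDerivAt_pow 2 y).const_mul (3:ℝ)
        simpa using this.congr_deriv (by ring)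
      have h2 : HasDerivAt (fun y' : ℝ => 1 - y' ^ 2) (-(2 * y)) y := by
        have := (hasDerivAt_pow 2 y).const_sub (1:ℝ)
        simpa using this.congr_deriv (by ring)
      exact h1.div h2 hdne
    have hrw : HasDerivAt (fun y' : ℝ => (3 * y' ^ 2 / (1 - y' ^ 2)) ^ α)
        (((6 * y * (1 - y ^ 2) - 3 * y ^ 2 * (-(2 * y))) / (1 - y ^ 2) ^ 2) * α
          * (3 * y ^ 2 / (1 - y ^ 2)) ^ (α - 1)) y :=
      hg.rpow_const (Or.inl hgne)
    have hdy : deriv (fun y' : ℝ =>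
        x ^ n * (3 * y' ^ 2 / (1 - y' ^ 2)) ^ α) y
        = x ^ n * (((6 * y * (1 - y ^ 2) - 3 * y ^ 2 * (-(2 * y))) / (1 - y ^ 2) ^ 2) * α
          * (3 * y ^ 2 / (1 - y ^ 2)) ^ (α - 1)) :=
      (hrw.const_mul (x ^ n)).deriv
    rw [hdx, hdy]
    have hsplit : (3 * y ^ 2 / (1 - y ^ 2)) ^ α
        = 3 * y ^ 2 / (1 - y ^ 2) * (3 * y ^ 2 / (1 - y ^ 2)) ^ (α - 1) := by
      rw [show α = 1 + (α - 1) from by ring, Real.rpow_add hgpos, Real.rpow_one]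
      ring_nf
    have hxpow : x * ((n : ℝ) * x ^ (n - 1)) = (n : ℝ) * x ^ n := by
      cases n with
      | zero => simp
      | succ m => simp [pow_succ]; ring
    set A := (3 * y ^ 2 / (1 - y ^ 2)) ^ (α - 1) with hA
    rw [hsplit]
    have hxc : ∀ c : ℝ, x * ((n : ℝ) * x ^ (n - 1) * c) = (n : ℝ) * x ^ n * c := by
      intro c; rw [show x * ((n:ℝ) * x ^ (n-1) * c) = x * ((n:ℝ) * x ^ (n-1)) * c from by ring,
        hxpow]
    rw [hxc]
    have hl : l = (n : ℝ) - 2 * α := by rw [hα]; ring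
    rw [hl]
    field_simp
    ring
  · intro x y _ _
    rw [deriv_pow_field, deriv_const]
    cases n with
    | zero => simp
    | succ m => simp [pow_succ]; ring
end

section
/- Let λ, c, a₀₀ ∈ ℝ and k ∈ ℝ with k ≠ 0, and define the cubic planar vector field P(x,y) = a₀₀ + (λ − c/(6k²)) x + (λ/2 − c/(6k²)) y − (c/(2k)) (x + y)² − (c/2) (x + y)³, Q(x,y) = (λ/(6k) − a₀₀) − (λ/2 − c/(6k²)) x + (c/(6k²)) y + (c/(2k)) (x + y)² + (c/2) (x + y)³. Then the function s₁(x,y) = c/(6k²) + (c/k)(x + y) + (3/2) c (x + y)² = ∂Q/∂y satisfies P ∂s₁/∂x + Q ∂s₁/∂y = λ s₁ for all (x,y) ∈ ℝ², i.e., the attraction rate s₁ is a Koopman eigenfunction of this vector field with eigenvalue λ. -/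
lemma deriv_aux (c k b : ℝ) :
    deriv (fun t : ℝ =>
      c / (6 * k ^ 2) + (c / k) * (t + b) + (3 / 2) * c * (t + b) ^ 2)
      = fun t => c / k + 3 * c * (t + b) := by
  funext t
  have h : HasDerivAt (fun t : ℝ =>
      c / (6 * k ^ 2) + (c / k) * (t + b) + (3 / 2) * c * (t + b) ^ 2)
      (c / k + 3 * c * (t + b)) t := by
    have h1 : HasDerivAt (fun t : ℝ => t + b) 1 t :=
      (hasDerivAt_id t).add_const b
    have := ((h1.const_mul (c / k)).const_add (c / (6 * k ^ 2))).add
      ((h1.pow 2).const_mul ((3 : ℝ) / 2 * c))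
    refine this.congr_deriv ?_
    simp only [Nat.cast_ofNat, pow_one, mul_one, Nat.add_one_sub_one]
    ring
  exact h.deriv

/-- For the cubic planar vector field
`P = a₀₀ + (λ − c/(6k²))x + (λ/2 − c/(6k²))y − (c/(2k))(x+y)² − (c/2)(x+y)³`,
`Q = (λ/(6k) − a₀₀) − (λ/2 − c/(6k²))x + (c/(6k²))y + (c/(2k))(x+y)² + (c/2)(x+y)³`
(with `k ≠ 0`), the attraction rate
`s₁ = ∂Q/∂y = c/(6k²) + (c/k)(x+y) + (3/2)c(x+y)²` is a Koopman eigenfunction with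
eigenvalue `λ`: `P ∂s₁/∂x + Q ∂s₁/∂y = λ s₁` everywhere. -/
theorem ftle_keig_stmt14 (l c a00 k : ℝ) (hk : k ≠ 0) :
    ∀ x y : ℝ,
      (a00 + (l - c / (6 * k ^ 2)) * x + (l / 2 - c / (6 * k ^ 2)) * y
          - (c / (2 * k)) * (x + y) ^ 2 - (c / 2) * (x + y) ^ 3) *
        deriv (fun x' : ℝ =>
          c / (6 * k ^ 2) + (c / k) * (x' + y) + (3 / 2) * c * (x' + y) ^ 2) x
      + ((l / (6 * k) - a00) - (l / 2 - c / (6 * k ^ 2)) * x + (c / (6 * k ^ 2)) * y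
          + (c / (2 * k)) * (x + y) ^ 2 + (c / 2) * (x + y) ^ 3) *
        deriv (fun y' : ℝ =>
          c / (6 * k ^ 2) + (c / k) * (x + y') + (3 / 2) * c * (x + y') ^ 2) y
      = l * (c / (6 * k ^ 2) + (c / k) * (x + y) + (3 / 2) * c * (x + y) ^ 2) := by
  intro x y
  have hy : deriv (fun y' : ℝ =>
      c / (6 * k ^ 2) + (c / k) * (x + y') + (3 / 2) * c * (x + y') ^ 2) y
      = c / k + 3 * c * (y + x) := by
    have := congrFun (deriv_aux c k x) y
    simpa [add_comm] using this
  rw [deriv_aux c k y, hy]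
  field_simp
  ring
end

section
/- For the cubic planar vector field P(x,y) = −2 + x + (x + y)² − (1/3)(x + y)³, Q(x,y) = 1 + y − (x + y)² + (1/3)(x + y)³, the function g(x,y) = ((x + y) − 1)² satisfies P ∂g/∂x + Q ∂g/∂y = 2 g for all (x,y) ∈ ℝ²; that is, the attraction rate field s₁(x,y) = ((x+y) − 1)² of this vector field is a Koopman eigenfunction with eigenvalue λ = 2. -/
lemma dcalc (c : ℝ) : deriv (fun t : ℝ => (t + c - 1) ^ 2) = fun t => 2 * (t + c - 1) := by
  ext t
  have : (fun t : ℝ => (t + c - 1) ^ 2) = fun t => t^2 + (2*c-2)*t + (c-1)^2 := by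
    ext t; ring
  rw [this]
  simp [deriv_add, deriv_mul, mul_comm]
  ring

/-- For the cubic planar vector field `P = −2 + x + (x+y)² − (1/3)(x+y)³`,
`Q = 1 + y − (x+y)² + (1/3)(x+y)³`, the attraction rate field
`g(x,y) = ((x+y) − 1)²` satisfies `P ∂g/∂x + Q ∂g/∂y = 2g` everywhere, i.e., it is a
Koopman eigenfunction with eigenvalue `2`. -/
theorem ftle_keig_stmt15 :
    ∀ x y : ℝ,
      (-2 + x + (x + y) ^ 2 - (1 / 3) * (x + y) ^ 3) *
          deriv (fun x' : ℝ => ((x' + y) - 1) ^ 2) x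
        + (1 + y - (x + y) ^ 2 + (1 / 3) * (x + y) ^ 3) *
          deriv (fun y' : ℝ => ((x + y') - 1) ^ 2) y
      = 2 * ((x + y) - 1) ^ 2 := by
  intro x y
  have h1 : (fun x' : ℝ => ((x' + y) - 1) ^ 2) = fun t => (t + y - 1)^2 := by ext t; ring
  have h2 : (fun y' : ℝ => ((x + y') - 1) ^ 2) = fun t => (t + x - 1)^2 := by ext t; ring
  rw [h1, h2, dcalc, dcalc]
  ring
end
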